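/- arXiv:1409.1423 — 2 statements merged into one kernel-verified Lean document; each statement's English description precedes it below -/
import Mathlib

section
/- If B_n is a sequence of finite Blaschke products converging uniformly on 𝔻 to a nonconstant function f, and the valence of f is bounded by N on 𝔻, then the degrees of B_n are eventually bounded, and along a subsequence of constant degree d the limit f has constant valence d on 𝔻. -/
open Complex Metric MeasureTheory Set Filter

noncomputable def blaschkeFactor (a z : ℂ) : ℂ := (z - a) / (1 - (starRingEnd ℂ) a * z)

open Topology

def IsFiniteBlaschkeDeg (n : ℕ) (f : ℂ → ℂ) : Prop :=
  ∃ (lam : ℂ) (a : Fin n → ℂ), ‖lam‖ = 1 ∧ (∀ i, a i ∈ ball (0:ℂ) 1) ∧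
    ∀ z ∈ ball (0:ℂ) 1, f z = lam * ∏ i, blaschkeFactor (a i) z

def IsFiniteBlaschke (f : ℂ → ℂ) : Prop := ∃ n : ℕ, 0 < n ∧ IsFiniteBlaschkeDeg n f

noncomputable def zeroOrder (f : ℂ → ℂ) (z₀ : ℂ) : ℕ :=
  sInf {n : ℕ | ∃ g : ℂ → ℂ, AnalyticAt ℂ g z₀ ∧ g z₀ ≠ 0 ∧
    ∀ᶠ z in nhds z₀, f z = (z - z₀) ^ n * g z}

def HasValence (f : ℂ → ℂ) (U : Set ℂ) (w : ℂ) (n : ℕ) : Prop :=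
  ∃ hS : {z ∈ U | f z = w}.Finite, ∑ z ∈ hS.toFinset, zeroOrder (fun x => f x - w) z = n

lemma nsq (z : ℂ) : normSq z = ‖z‖ ^ 2 := by
  rw [Complex.normSq_eq_norm_sq]

-- key identity
lemma bf_norm_id (a z : ℂ) :
    ‖1 - (starRingEnd ℂ) a * z‖ ^ 2 - ‖z - a‖ ^ 2 = (1 - ‖z‖ ^ 2) * (1 - ‖a‖ ^ 2) := by
  rw [← nsq, ← nsq, ← nsq, ← nsq]
  simp [Complex.normSq_apply, Complex.sub_re, Complex.sub_im, Complex.mul_re, Complex.mul_im,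
    Complex.conj_re, Complex.conj_im]
  ring

lemma bf_den_norm_pos {a z : ℂ} (ha : ‖a‖ ≤ 1) (hz : ‖z‖ < 1) :
    0 < ‖1 - (starRingEnd ℂ) a * z‖ := by
  have h1 : ‖(starRingEnd ℂ) a * z‖ < 1 := by
    rw [norm_mul, RingHomIsometric.norm_map]
    nlinarith [norm_nonneg a, norm_nonneg z]
  have := norm_sub_norm_le (1 : ℂ) ((starRingEnd ℂ) a * z)
  simp only [norm_one] at this
  linarith

lemma bf_num_le_den {a z : ℂ} (ha : ‖a‖ ≤ 1) (hz : ‖z‖ ≤ 1) :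
    ‖z - a‖ ≤ ‖1 - (starRingEnd ℂ) a * z‖ := by
  have h := bf_norm_id a z
  have key : 0 ≤ (1 - ‖z‖ ^ 2) * (1 - ‖a‖ ^ 2) :=
    mul_nonneg (by nlinarith [norm_nonneg z]) (by nlinarith [norm_nonneg a])
  have h2 : ‖z - a‖ ^ 2 ≤ ‖1 - (starRingEnd ℂ) a * z‖ ^ 2 := by linarith
  exact le_of_pow_le_pow_left₀ two_ne_zero (norm_nonneg _) h2

lemma bf_norm_le_one {a z : ℂ} (ha : ‖a‖ ≤ 1) (hz : ‖z‖ < 1) :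
    ‖blaschkeFactor a z‖ ≤ 1 := by
  have hd := bf_den_norm_pos ha hz
  rw [blaschkeFactor, norm_div, div_le_one hd]
  exact bf_num_le_den ha hz.le

lemma bf_den_le_num {a z : ℂ} (ha : ‖a‖ ≤ 1) (hz : 1 ≤ ‖z‖) :
    ‖1 - (starRingEnd ℂ) a * z‖ ≤ ‖z - a‖ := by
  have h := bf_norm_id a z
  have key : (1 - ‖z‖ ^ 2) * (1 - ‖a‖ ^ 2) ≤ 0 :=
    mul_nonpos_of_nonpos_of_nonneg (by nlinarith [norm_nonneg z]) (by nlinarith [norm_nonneg a])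
  have h2 : ‖1 - (starRingEnd ℂ) a * z‖ ^ 2 ≤ ‖z - a‖ ^ 2 := by linarith
  exact le_of_pow_le_pow_left₀ two_ne_zero (norm_nonneg _) h2

lemma bf_norm_eq_one {a z : ℂ} (ha : ‖a‖ < 1) (hz : ‖z‖ = 1) :
    ‖blaschkeFactor a z‖ = 1 := by
  have hd : 0 < ‖1 - (starRingEnd ℂ) a * z‖ := by
    have h1 : ‖(starRingEnd ℂ) a * z‖ < 1 := by
      rw [norm_mul, RingHomIsometric.norm_map, hz, mul_one]; exact ha
    have := norm_sub_norm_le (1 : ℂ) ((starRingEnd ℂ) a * z)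
    simp only [norm_one] at this
    linarith
  have h := bf_norm_id a z
  rw [hz] at h
  simp only [one_pow, sub_self, zero_mul] at h
  rw [blaschkeFactor, norm_div, div_eq_one_iff_eq hd.ne']
  nlinarith [norm_nonneg (z - a), norm_nonneg (1 - (starRingEnd ℂ) a * z)]

lemma bf_continuousAt {a : ℂ} (ha : ‖a‖ ≤ 1) {z : ℂ} (hz : ‖a‖ * ‖z‖ < 1) :
    ContinuousAt (blaschkeFactor a) z := by
  apply ContinuousAt.div (by fun_prop)
    (Continuous.continuousAt (by continuity))
  intro h
  have : ‖(starRingEnd ℂ) a * z‖ = 1 := by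
    have : (starRingEnd ℂ) a * z = 1 := by linear_combination -h
    rw [this, norm_one]
  rw [norm_mul, RingHomIsometric.norm_map] at this
  exact absurd this hz.ne

-- continuity in the parameter a
lemma bf_param_continuousAt {z : ℂ} (hz : ‖z‖ < 1) {a : ℂ} (ha : ‖a‖ ≤ 1) :
    ContinuousAt (fun b => blaschkeFactor b z) a := by
  apply ContinuousAt.div (by fun_prop)
    (Continuous.continuousAt (by continuity))
  intro h
  have : ‖(starRingEnd ℂ) a * z‖ = 1 := by
    have : (starRingEnd ℂ) a * z = 1 := by linear_combination -h
    rw [this, norm_one]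
  rw [norm_mul, RingHomIsometric.norm_map] at this
  nlinarith [norm_nonneg a, norm_nonneg z]

lemma prodbf_continuousAt {m : ℕ} (lam : ℂ) (a : Fin m → ℂ) (ha : ∀ i, ‖a i‖ < 1) {c : ℂ}
    (hc : ‖c‖ ≤ 1) : ContinuousAt (fun z => lam * ∏ i, blaschkeFactor (a i) z) c := by
  refine continuousAt_const.mul ?_
  exact tendsto_finset_prod _ fun i _ => bf_continuousAt (ha i).le
    (by nlinarith [norm_nonneg (a i), norm_nonneg c, ha i])

lemma mem_ball01 {z : ℂ} : z ∈ ball (0:ℂ) 1 ↔ ‖z‖ < 1 := mem_ball_zero_iff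

lemma no_boundary_zeros (B : ℕ → ℂ → ℂ) (d : ℕ → ℕ)
    (hB : ∀ n, IsFiniteBlaschkeDeg (d n) (B n)) (f : ℂ → ℂ)
    (hconv : TendstoUniformlyOn B f atTop (ball (0:ℂ) 1))
    (z : ℕ → ℂ) (hz : ∀ k, z k ∈ ball (0:ℂ) 1) (n : ℕ → ℕ) (hn : Tendsto n atTop atTop)
    (hzero : ∀ k, B (n k) (z k) = 0) (c : ℂ) (hc : ‖c‖ = 1) (hlim : Tendsto z atTop (𝓝 c)) :
    False := by
  have h8 := (Metric.tendstoUniformlyOn_iff.mp hconv) (1/8) (by norm_num)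
  rw [eventually_atTop] at h8
  obtain ⟨K, hK⟩ := h8
  obtain ⟨lam, a, hlam, hain, hfor⟩ := hB K
  set G : ℂ → ℂ := fun x => lam * ∏ i, blaschkeFactor (a i) x with hG
  have ha' : ∀ i, ‖a i‖ < 1 := fun i => mem_ball01.mp (hain i)
  have hGzk : ∀ᶠ k in atTop, ‖G (z k)‖ ≤ 1/4 := by
    filter_upwards [hn.eventually_ge_atTop K] with k hk
    have h1 : dist (f (z k)) (B K (z k)) < 1/8 := hK K le_rfl (z k) (hz k)
    have h2 : dist (f (z k)) (B (n k) (z k)) < 1/8 := hK (n k) hk (z k) (hz k)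
    have : G (z k) = B K (z k) - B (n k) (z k) := by
      rw [hzero k, sub_zero, hfor (z k) (hz k)]
    rw [this]
    have := dist_triangle (B K (z k)) (f (z k)) (B (n k) (z k))
    rw [dist_comm (B K (z k)) (f (z k))] at this
    rw [← dist_eq_norm]
    have hd : dist (B K (z k)) (B (n k) (z k)) ≤ dist (f (z k)) (B K (z k)) +
        dist (f (z k)) (B (n k) (z k)) := this
    linarith
  have hGc : Tendsto (fun k => G (z k)) atTop (𝓝 (G c)) :=
    ((prodbf_continuousAt lam a ha' hc.le).tendsto).comp hlim
  have hGcnorm : ‖G c‖ = 1 := by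
    rw [hG]
    simp only [norm_mul, norm_prod]
    rw [show ‖lam‖ = 1 from hlam]
    rw [Finset.prod_congr rfl fun i _ => bf_norm_eq_one (ha' i) hc]
    simp
  have := le_of_tendsto hGc.norm hGzk
  rw [hGcnorm] at this
  norm_num at this

lemma Bn_diff {m : ℕ} {Bn : ℂ → ℂ} (h : IsFiniteBlaschkeDeg m Bn) :
    DifferentiableOn ℂ Bn (ball (0:ℂ) 1) := by
  obtain ⟨lam, a, hlam, hain, hfor⟩ := h
  have hd : DifferentiableOn ℂ (fun z => lam * ∏ i, blaschkeFactor (a i) z) (ball (0:ℂ) 1) := by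
    refine DifferentiableOn.const_mul ?_ lam
    refine DifferentiableOn.fun_finsetProd fun i _ => ?_
    unfold blaschkeFactor
    refine DifferentiableOn.div (differentiableOn_id.sub (differentiableOn_const _))
      ((differentiableOn_const _).sub (DifferentiableOn.const_mul differentiableOn_id _))
      fun z hz => ?_
    intro hcon
    have h0 := bf_den_norm_pos (mem_ball01.mp (hain i)).le (mem_ball01.mp hz)
    rw [hcon] at h0
    simp at h0
  exact hd.congr fun z hz => hfor z hz

lemma f_analytic (B : ℕ → ℂ → ℂ) (d : ℕ → ℕ)
    (hB : ∀ n, IsFiniteBlaschkeDeg (d n) (B n)) (f : ℂ → ℂ)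
    (hconv : TendstoUniformlyOn B f atTop (ball (0:ℂ) 1)) :
    AnalyticOnNhd ℂ f (ball (0:ℂ) 1) := by
  refine DifferentiableOn.analyticOnNhd ?_ isOpen_ball
  exact hconv.tendstoLocallyUniformlyOn.differentiableOn
    (Eventually.of_forall fun n => Bn_diff (hB n)) isOpen_ball

lemma key_extract (B : ℕ → ℂ → ℂ) (d : ℕ → ℕ)
    (hB : ∀ n, IsFiniteBlaschkeDeg (d n) (B n)) (f : ℂ → ℂ)
    (hconv : TendstoUniformlyOn B f atTop (ball (0:ℂ) 1))
    (m : ℕ) (ψ : ℕ → ℕ) (hψ : StrictMono ψ)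
    (ζ : ℕ → Fin m → ℂ) (hζ : ∀ n i, ζ n i ∈ ball (0:ℂ) 1)
    (hbd : ∀ n, ∀ z ∈ ball (0:ℂ) 1, ‖B (ψ n) z‖ ≤ ∏ i, ‖blaschkeFactor (ζ n i) z‖) :
    ∃ (σ : ℕ → ℕ) (c : Fin m → ℂ), StrictMono σ ∧ (∀ i, c i ∈ ball (0:ℂ) 1) ∧
      Tendsto (fun k => ζ (σ k)) atTop (𝓝 c) ∧
      ∀ z ∈ ball (0:ℂ) 1, ‖f z‖ ≤ ∏ i, ‖blaschkeFactor (c i) z‖ := by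
  have hcomp : IsCompact (Set.pi univ fun _ : Fin m => closedBall (0:ℂ) 1) :=
    isCompact_univ_pi fun _ => isCompact_closedBall 0 1
  have hmem : ∀ n, ζ n ∈ (Set.pi univ fun _ : Fin m => closedBall (0:ℂ) 1) := by
    intro n
    rw [Set.mem_univ_pi]
    exact fun i => ball_subset_closedBall (hζ n i)
  obtain ⟨c, hcS, σ, hσ, hlim⟩ := hcomp.tendsto_subseq hmem
  have hlimi : ∀ i, Tendsto (fun k => ζ (σ k) i) atTop (𝓝 (c i)) :=
    fun i => tendsto_pi_nhds.mp hlim i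
  have hzero : ∀ k i, B (ψ (σ k)) (ζ (σ k) i) = 0 := by
    intro k i
    have h1 := hbd (σ k) (ζ (σ k) i) (hζ (σ k) i)
    have h2 : ∏ j, ‖blaschkeFactor (ζ (σ k) j) (ζ (σ k) i)‖ = 0 := by
      apply Finset.prod_eq_zero (Finset.mem_univ i)
      simp [blaschkeFactor]
    rw [h2] at h1
    exact norm_le_zero_iff.mp h1
  have hcball : ∀ i, c i ∈ ball (0:ℂ) 1 := by
    intro i
    have hle : ‖c i‖ ≤ 1 := by
      have := (Set.mem_univ_pi.mp hcS) i
      rwa [Metric.mem_closedBall, dist_zero_right] at this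
    rcases lt_or_eq_of_le hle with h | h
    · exact mem_ball01.mpr h
    · exfalso
      exact no_boundary_zeros B d hB f hconv (fun k => ζ (σ k) i)
        (fun k => hζ (σ k) i) (fun k => ψ (σ k)) ((hψ.comp hσ).tendsto_atTop)
        (fun k => hzero k i) (c i) h (hlimi i)
  refine ⟨σ, c, hσ, hcball, hlim, fun z hz => ?_⟩
  have hz' : ‖z‖ < 1 := mem_ball01.mp hz
  have h1 : Tendsto (fun k => ‖f z - B (ψ (σ k)) z‖) atTop (𝓝 0) := by
    have hb := (hconv.tendsto_at hz).comp ((hψ.comp hσ).tendsto_atTop)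
    have := (tendsto_const_nhds (x := f z) (f := atTop (α := ℕ)) |>.sub hb).norm
    simpa using this
  have h2 : Tendsto (fun k => ∏ i, ‖blaschkeFactor (ζ (σ k) i) z‖) atTop
      (𝓝 (∏ i, ‖blaschkeFactor (c i) z‖)) := by
    refine tendsto_finset_prod _ fun i _ => ?_
    exact (((bf_param_continuousAt hz' (mem_ball01.mp (hcball i)).le).tendsto).comp
      (hlimi i)).norm
  have h3 : Tendsto (fun k => ‖f z - B (ψ (σ k)) z‖ + ∏ i, ‖blaschkeFactor (ζ (σ k) i) z‖)
      atTop (𝓝 (∏ i, ‖blaschkeFactor (c i) z‖)) := by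
    have := h1.add h2
    simpa using this
  refine ge_of_tendsto h3 (Eventually.of_forall fun k => ?_)
  calc ‖f z‖ ≤ ‖f z - B (ψ (σ k)) z‖ + ‖B (ψ (σ k)) z‖ := by
        have := norm_sub_norm_le (f z) (B (ψ (σ k)) z); linarith [norm_sub_norm_le (f z) (B (ψ (σ k)) z), abs_norm_sub_norm_le (f z) (B (ψ (σ k)) z)]
    _ ≤ ‖f z - B (ψ (σ k)) z‖ + ∏ i, ‖blaschkeFactor (ζ (σ k) i) z‖ := by
        linarith [hbd (σ k) z hz]

lemma bf_norm_le_mul {a z : ℂ} (ha : ‖a‖ < 1) (hz : ‖z‖ < 1) :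
    ‖blaschkeFactor a z‖ ≤ ‖z - a‖ * (1 - ‖a‖)⁻¹ := by
  have hd : (0:ℝ) < 1 - ‖a‖ := by linarith
  have hden : 1 - ‖a‖ ≤ ‖1 - (starRingEnd ℂ) a * z‖ := by
    have h1 : ‖(starRingEnd ℂ) a * z‖ ≤ ‖a‖ := by
      rw [norm_mul, RingHomIsometric.norm_map]
      nlinarith [norm_nonneg a, norm_nonneg z]
    have := norm_sub_norm_le (1 : ℂ) ((starRingEnd ℂ) a * z)
    simp only [norm_one] at this
    linarith
  rw [blaschkeFactor, norm_div]
  rw [div_le_iff₀ (lt_of_lt_of_le hd hden)]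
  rw [mul_assoc]
  refine le_mul_of_one_le_right (norm_nonneg _) ?_
  rw [inv_mul_eq_div, le_div_iff₀ hd, one_mul]
  exact hden

lemma prodbf_le_pow {m : ℕ} (c : Fin m → ℂ) (hc : ∀ i, ‖c i‖ < 1) (p : ℂ) (hp : ‖p‖ < 1)
    {z : ℂ} (hz : ‖z‖ < 1) :
    ∏ i, ‖blaschkeFactor (c i) z‖ ≤
      ‖z - p‖ ^ (Finset.univ.filter fun i => c i = p).card * ((1 - ‖p‖)⁻¹) ^ (Finset.univ.filter fun i => c i = p).card := by
  rw [← Finset.prod_filter_mul_prod_filter_not Finset.univ (fun i => c i = p)]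
  have h2 : ∏ i ∈ Finset.univ.filter fun i => ¬ c i = p, ‖blaschkeFactor (c i) z‖ ≤ 1 :=
    Finset.prod_le_one (fun i _ => norm_nonneg _) (fun i _ => bf_norm_le_one (hc i).le hz)
  have h1 : ∏ i ∈ Finset.univ.filter fun i => c i = p, ‖blaschkeFactor (c i) z‖ ≤
      (‖z - p‖ * (1 - ‖p‖)⁻¹) ^ (Finset.univ.filter fun i => c i = p).card := by
    rw [← Finset.prod_const]
    refine Finset.prod_le_prod (fun i _ => norm_nonneg _) (fun i hi => ?_)
    rw [Finset.mem_filter] at hi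
    rw [hi.2] at *
    exact hi.2 ▸ bf_norm_le_mul hp hz
  calc _ ≤ (‖z - p‖ * (1 - ‖p‖)⁻¹) ^ (Finset.univ.filter fun i => c i = p).card * 1 :=
        mul_le_mul h1 h2 (Finset.prod_nonneg fun i _ => norm_nonneg _)
          (pow_nonneg (mul_nonneg (norm_nonneg _) (inv_nonneg.mpr (by linarith))) _)
    _ = _ := by rw [mul_one, mul_pow]

lemma zeroOrder_ge_mult (f : ℂ → ℂ) (hfa : AnalyticOnNhd ℂ f (ball (0:ℂ) 1))
    (hnc : ¬ ∃ c : ℂ, ∀ z ∈ ball (0:ℂ) 1, f z = c)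
    {m : ℕ} (c : Fin m → ℂ) (hc : ∀ i, c i ∈ ball (0:ℂ) 1)
    (hbd : ∀ z ∈ ball (0:ℂ) 1, ‖f z‖ ≤ ∏ i, ‖blaschkeFactor (c i) z‖)
    (p : ℂ) (hp : p ∈ ball (0:ℂ) 1) :
    (Finset.univ.filter fun i => c i = p).card ≤ zeroOrder f p := by
  set mult := (Finset.univ.filter fun i => c i = p).card with hmult
  have hp' : ‖p‖ < 1 := mem_ball01.mp hp
  have hne : ¬ ∀ᶠ z in 𝓝 p, f z = 0 := by
    intro hev
    refine hnc ⟨0, fun z hz => ?_⟩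
    exact hfa.eqOn_zero_of_preconnected_of_eventuallyEq_zero
      (convex_ball (0:ℂ) 1).isPreconnected hp hev hz
  set S := {n : ℕ | ∃ g : ℂ → ℂ, AnalyticAt ℂ g p ∧ g p ≠ 0 ∧
    ∀ᶠ z in nhds p, f z = (z - p) ^ n * g z} with hS
  have hfp : AnalyticAt ℂ f p := hfa p hp
  have hotop : analyticOrderAt f p ≠ ⊤ := fun h => hne (analyticOrderAt_eq_top.mp h)
  have hSne : S.Nonempty := by
    obtain ⟨g, hgan, hg0, hev⟩ := (hfp.analyticOrderAt_eq_natCast (n := (analyticOrderAt f p).toNat)).mp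
      (ENat.coe_toNat hotop).symm
    exact ⟨(analyticOrderAt f p).toNat, g, hgan, hg0, hev.mono fun z hz => by
      rw [hz, smul_eq_mul]⟩
  have hlb : ∀ n ∈ S, mult ≤ n := by
    intro n hn
    obtain ⟨g, hgan, hg0, hev⟩ := hn
    by_contra hlt
    push_neg at hlt
    apply hg0
    -- show g p = 0
    have hevball : ∀ᶠ z in 𝓝[≠] p, ‖g z‖ ≤ ‖z - p‖ ^ (mult - n) * ((1 - ‖p‖)⁻¹) ^ mult := by
      have h1 : ∀ᶠ z in 𝓝 p, z ∈ ball (0:ℂ) 1 ∧ f z = (z - p) ^ n * g z :=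
        (isOpen_ball.eventually_mem hp).and hev
      filter_upwards [eventually_nhdsWithin_of_eventually_nhds h1,
        eventually_mem_nhdsWithin] with z hz1 (hzne : z ∈ ({p}ᶜ : Set ℂ))
      obtain ⟨hzball, hzf⟩ := hz1
      have hznep : z - p ≠ 0 := sub_ne_zero.mpr hzne
      have hzp : (0:ℝ) < ‖z - p‖ := norm_pos_iff.mpr hznep
      have hf1 : ‖z - p‖ ^ n * ‖g z‖ ≤ ‖z - p‖ ^ mult * ((1 - ‖p‖)⁻¹) ^ mult := by
        rw [← norm_pow, ← norm_mul, ← hzf]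
        exact (hbd z hzball).trans (prodbf_le_pow c (fun i => mem_ball01.mp (hc i)) p hp'
          (mem_ball01.mp hzball))
      have hsplit : ‖z - p‖ ^ mult = ‖z - p‖ ^ n * ‖z - p‖ ^ (mult - n) := by
        rw [← pow_add]
        congr 1
        omega
      rw [hsplit, mul_assoc] at hf1
      exact le_of_mul_le_mul_left hf1 (pow_pos hzp n)
    have hgcont : Tendsto (fun z => ‖g z‖) (𝓝[≠] p) (𝓝 ‖g p‖) :=
      (hgan.continuousAt.norm.tendsto).mono_left nhdsWithin_le_nhds
    have hub : Tendsto (fun z : ℂ => ‖z - p‖ ^ (mult - n) * ((1 - ‖p‖)⁻¹) ^ mult)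
        (𝓝[≠] p) (𝓝 0) := by
      have hcont : ContinuousAt (fun z : ℂ => ‖z - p‖ ^ (mult - n) * ((1 - ‖p‖)⁻¹) ^ mult) p := by
        fun_prop
      have hval : ‖p - p‖ ^ (mult - n) * ((1 - ‖p‖)⁻¹) ^ mult = 0 := by
        rw [sub_self, norm_zero, zero_pow (by omega)]
        ring
      have := hcont.tendsto.mono_left (nhdsWithin_le_nhds (s := ({p}ᶜ : Set ℂ)))
      rwa [hval] at this
    have hle : ‖g p‖ ≤ 0 := le_of_tendsto_of_tendsto hgcont hub hevball
    exact norm_le_zero_iff.mp hle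
  calc mult ≤ sInf S := le_csInf hSne hlb
    _ = zeroOrder f p := rfl

lemma prodnorm_of_rep {m : ℕ} {Bn : ℂ → ℂ} {lam : ℂ} {a : Fin m → ℂ}
    (hlam : ‖lam‖ = 1)
    (hfor : ∀ z ∈ ball (0:ℂ) 1, Bn z = lam * ∏ i, blaschkeFactor (a i) z)
    {z : ℂ} (hz : z ∈ ball (0:ℂ) 1) :
    ‖Bn z‖ = ∏ i, ‖blaschkeFactor (a i) z‖ := by
  rw [hfor z hz, norm_mul, norm_prod, show ‖lam‖ = 1 from hlam, one_mul]

lemma deg_bound (B : ℕ → ℂ → ℂ) (d : ℕ → ℕ)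
    (hB : ∀ n, IsFiniteBlaschkeDeg (d n) (B n)) (f : ℂ → ℂ)
    (hconv : TendstoUniformlyOn B f atTop (ball (0:ℂ) 1))
    (hnc : ¬ ∃ c : ℂ, ∀ z ∈ ball (0:ℂ) 1, f z = c)
    (N : ℕ) (hval : ∀ w ∈ ball (0:ℂ) 1, ∃ m ≤ N, HasValence f (ball (0:ℂ) 1) w m) :
    ∀ᶠ n in atTop, d n ≤ N := by
  by_contra h
  rw [Filter.not_eventually] at h
  obtain ⟨ψ, hψmono, hψ⟩ := extraction_of_frequently_atTop h
  have hle : ∀ n, N + 1 ≤ d (ψ n) := fun n => by have := hψ n; omega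
  choose lam a hlam hain hfor using fun n => hB (ψ n)
  set ζ : ℕ → Fin (N+1) → ℂ := fun n i => a n (Fin.castLEEmb (hle n) i) with hζdef
  have hζ : ∀ n i, ζ n i ∈ ball (0:ℂ) 1 := fun n i => hain n _
  have hbd : ∀ n, ∀ z ∈ ball (0:ℂ) 1, ‖B (ψ n) z‖ ≤ ∏ i, ‖blaschkeFactor (ζ n i) z‖ := by
    intro n z hz
    rw [prodnorm_of_rep (hlam n) (hfor n) hz]
    classical
    set T : Finset (Fin (d (ψ n))) := Finset.univ.map (Fin.castLEEmb (hle n)) with hT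
    rw [← Finset.prod_mul_prod_compl T]
    have h1 : ∏ i ∈ T, ‖blaschkeFactor (a n i) z‖ = ∏ i, ‖blaschkeFactor (ζ n i) z‖ := by
      rw [hT, Finset.prod_map]
    have h2 : ∏ i ∈ Tᶜ, ‖blaschkeFactor (a n i) z‖ ≤ 1 :=
      Finset.prod_le_one (fun i _ => norm_nonneg _)
        (fun i _ => bf_norm_le_one (mem_ball01.mp (hain n i)).le (mem_ball01.mp hz))
    rw [← h1]
    exact mul_le_of_le_one_right (Finset.prod_nonneg fun i _ => norm_nonneg _) h2
  obtain ⟨σ, c, hσ, hcball, hlim, hfbd⟩ := key_extract B d hB f hconv (N+1) ψ hψmono ζ hζ hbd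
  have hfa := f_analytic B d hB f hconv
  obtain ⟨m₀, hm₀N, hfin, hsum⟩ := hval 0 (mem_ball_self one_pos)
  classical
  have hsub : Finset.image c Finset.univ ⊆ hfin.toFinset := by
    intro p hp
    obtain ⟨i, _, rfl⟩ := Finset.mem_image.mp hp
    rw [Set.Finite.mem_toFinset]
    refine ⟨hcball i, ?_⟩
    have h1 := hfbd (c i) (hcball i)
    have h2 : ∏ j, ‖blaschkeFactor (c j) (c i)‖ = 0 :=
      Finset.prod_eq_zero (Finset.mem_univ i) (by simp [blaschkeFactor])
    rw [h2] at h1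
    exact norm_le_zero_iff.mp h1
  have hfeq : (fun x => f x - 0) = f := by funext x; ring
  have hcount : N + 1 ≤ m₀ := by
    have hcard : N + 1 = ∑ p ∈ Finset.image c Finset.univ,
        (Finset.univ.filter fun i => c i = p).card := by
      have := Finset.card_eq_sum_card_image c (Finset.univ : Finset (Fin (N+1)))
      simpa using this
    rw [← hsum, hfeq]
    rw [hcard]
    refine le_trans (Finset.sum_le_sum fun p hp => ?_) (Finset.sum_le_sum_of_subset hsub)
    obtain ⟨i, _, rfl⟩ := Finset.mem_image.mp hp
    exact zeroOrder_ge_mult f hfa hnc c hcball hfbd (c i) (hcball i)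
  omega

open Polynomial in
lemma valence_of_blaschke {m : ℕ} (f : ℂ → ℂ) (lam : ℂ) (hlam : ‖lam‖ = 1)
    (c : Fin m → ℂ) (hc : ∀ i, ‖c i‖ < 1)
    (hfor : ∀ z ∈ ball (0:ℂ) 1, f z = lam * ∏ i, blaschkeFactor (c i) z)
    (w : ℂ) (hw : w ∈ ball (0:ℂ) 1) : HasValence f (ball (0:ℂ) 1) w m := by
  classical
  have hw' : ‖w‖ < 1 := mem_ball01.mp hw
  have hlam0 : lam ≠ 0 := fun h => by simp [h] at hlam
  set P : ℂ[X] := C lam * ∏ i, (X - C (c i)) with hP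
  set Q : ℂ[X] := ∏ i, (C 1 - C ((starRingEnd ℂ) (c i)) * X) with hQ
  set R : ℂ[X] := P - C w * Q with hR
  have hQeval : ∀ z : ℂ, Q.eval z = ∏ i, (1 - (starRingEnd ℂ) (c i) * z) := by
    intro z; rw [hQ, eval_prod]; simp
  have hPeval : ∀ z : ℂ, P.eval z = lam * ∏ i, (z - c i) := by
    intro z; rw [hP, eval_mul, eval_prod]; simp
  have hReval : ∀ z : ℂ, R.eval z = P.eval z - w * Q.eval z := by
    intro z; rw [hR]; simp
  have hQne : ∀ z : ℂ, ‖z‖ < 1 → Q.eval z ≠ 0 := by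
    intro z hz
    rw [hQeval]
    rw [Finset.prod_ne_zero_iff]
    intro i _ h0
    have := bf_den_norm_pos (hc i).le hz
    rw [h0, norm_zero] at this
    exact lt_irrefl _ this
  have hfz : ∀ z ∈ ball (0:ℂ) 1, f z = P.eval z / Q.eval z := by
    intro z hz
    rw [hfor z hz, hPeval, hQeval, mul_div_assoc, ← Finset.prod_div_distrib]
    rfl
  have hfz' : ∀ z ∈ ball (0:ℂ) 1, f z - w = R.eval z / Q.eval z := by
    intro z hz
    have hq := hQne z (mem_ball01.mp hz)
    rw [eq_div_iff hq, sub_mul, hReval, hfz z hz, div_mul_cancel₀ _ hq]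
  have hroot_iff : ∀ z ∈ ball (0:ℂ) 1, (f z = w ↔ R.eval z = 0) := by
    intro z hz
    have hq := hQne z (mem_ball01.mp hz)
    rw [← sub_eq_zero (a := f z), hfz' z hz]
    simp [_root_.div_eq_zero_iff, hq]
  -- degree facts
  have hM : (∏ i, (X - C (c i)) : ℂ[X]).Monic :=
    monic_prod_of_monic _ _ fun i _ => monic_X_sub_C (c i)
  have hMdeg : (∏ i, (X - C (c i)) : ℂ[X]).natDegree = m := by
    rw [natDegree_prod _ _ fun i _ => X_sub_C_ne_zero (c i)]
    simp [natDegree_X_sub_C]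
  have hPdeg : P.natDegree = m := by
    rw [hP, natDegree_C_mul hlam0, hMdeg]
  have hPcoeff : P.coeff m = lam := by
    have h1 := hM.coeff_natDegree
    rw [hMdeg] at h1
    rw [hP, coeff_C_mul, h1, mul_one]
  have hQdeg : Q.natDegree ≤ m := by
    refine le_trans (natDegree_prod_le _ _) ?_
    have : ∀ i : Fin m, (C 1 - C ((starRingEnd ℂ) (c i)) * X : ℂ[X]).natDegree ≤ 1 := by
      intro i
      have he : (C 1 - C ((starRingEnd ℂ) (c i)) * X : ℂ[X]) =
          C (-(starRingEnd ℂ) (c i)) * X + C 1 := by ring_nf; simp [map_neg]; ring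
      rw [he]
      exact natDegree_linear_le
    calc ∑ i, (C 1 - C ((starRingEnd ℂ) (c i)) * X : ℂ[X]).natDegree ≤ ∑ _i : Fin m, 1 :=
          Finset.sum_le_sum fun i _ => this i
      _ = m := by simp
  have hQcoeff : Q.coeff m = ∏ i, (-(starRingEnd ℂ) (c i)) := by
    have h := coeff_prod_of_natDegree_le (s := (Finset.univ : Finset (Fin m)))
      (fun i => (C 1 - C ((starRingEnd ℂ) (c i)) * X : ℂ[X])) 1 ?_
    · rw [show (Finset.univ : Finset (Fin m)).card * 1 = m by simp] at h
      rw [hQ, h]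
      refine Finset.prod_congr rfl fun i _ => ?_
      simp [coeff_sub, coeff_C, coeff_one, coeff_C_mul, coeff_X_one]
    · intro i _
      show (C 1 - C ((starRingEnd ℂ) (c i)) * X : ℂ[X]).natDegree ≤ 1
      have he : (C 1 - C ((starRingEnd ℂ) (c i)) * X : ℂ[X]) =
          C (-(starRingEnd ℂ) (c i)) * X + C 1 := by ring_nf; simp [map_neg]; ring
      rw [he]
      exact natDegree_linear_le
  have hRcoeff : R.coeff m = lam - w * ∏ i, (-(starRingEnd ℂ) (c i)) := by
    simp only [hR, coeff_sub, coeff_C_mul, hPcoeff, hQcoeff]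
  have hlead_ne : R.coeff m ≠ 0 := by
    rw [hRcoeff, sub_ne_zero]
    intro h
    have h1 : ‖w * ∏ i, (-(starRingEnd ℂ) (c i))‖ < 1 := by
      rw [norm_mul, norm_prod]
      have h2 : ∏ i, ‖(-(starRingEnd ℂ) (c i))‖ ≤ 1 :=
        Finset.prod_le_one (fun i _ => norm_nonneg _) fun i _ => by
          rw [norm_neg, RingHomIsometric.norm_map]; exact (hc i).le
      nlinarith [norm_nonneg w, Finset.prod_nonneg
        (fun i (_ : i ∈ Finset.univ) => norm_nonneg (-(starRingEnd ℂ) (c i)))]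
    rw [← h, hlam] at h1
    exact lt_irrefl _ h1
  have hRne : R ≠ 0 := fun h => hlead_ne (by rw [h, coeff_zero])
  have hRdeg : R.natDegree = m := by
    refine le_antisymm ?_ (le_natDegree_of_ne_zero hlead_ne)
    rw [hR]
    refine le_trans (natDegree_sub_le _ _) (max_le hPdeg.le ?_)
    exact le_trans (natDegree_C_mul_le _ _) hQdeg
  -- roots in the ball
  have hroots_ball : ∀ z ∈ R.roots, ‖z‖ < 1 := by
    intro z hz
    have hz0 : R.eval z = 0 := (mem_roots'.mp hz).2
    by_contra hge
    push_neg at hge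
    have hPQ : P.eval z = w * Q.eval z := by
      have h1 := hReval z
      rw [hz0] at h1
      linear_combination -h1
    by_cases hq : Q.eval z = 0
    · rw [hq, mul_zero, hPeval] at hPQ
      rcases mul_eq_zero.mp hPQ with h | h
      · exact hlam0 h
      · obtain ⟨i, _, hi⟩ := Finset.prod_eq_zero_iff.mp h
        have : z = c i := by linear_combination hi
        rw [this] at hge
        exact absurd (hc i) (not_lt.mpr hge)
    · have h1 : ‖P.eval z‖ = ∏ i, ‖z - c i‖ := by
        rw [hPeval, norm_mul, hlam, one_mul, norm_prod]
      have h2 : ‖Q.eval z‖ = ∏ i, ‖1 - (starRingEnd ℂ) (c i) * z‖ := by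
        rw [hQeval, norm_prod]
      have h3 : ‖P.eval z‖ < ‖Q.eval z‖ := by
        rw [hPQ, norm_mul]
        nlinarith [norm_pos_iff.mpr hq, norm_nonneg (Q.eval z)]
      have h4 : ‖Q.eval z‖ ≤ ‖P.eval z‖ := by
        rw [h1, h2]
        exact Finset.prod_le_prod (fun i _ => norm_nonneg _)
          (fun i _ => bf_den_le_num (hc i).le hge)
      linarith
  -- the fiber is exactly the root set of R
  have hFeq : {z ∈ ball (0:ℂ) 1 | f z = w} = ↑R.roots.toFinset := by
    ext z
    simp only [Set.mem_setOf_eq, Finset.coe_sort_coe, Multiset.mem_toFinset, Finset.mem_coe]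
    constructor
    · rintro ⟨hzb, hzw⟩
      rw [mem_roots']
      exact ⟨hRne, (hroot_iff z hzb).mp hzw⟩
    · intro hz
      have hzb : z ∈ ball (0:ℂ) 1 := mem_ball01.mpr (hroots_ball z hz)
      exact ⟨hzb, (hroot_iff z hzb).mpr (mem_roots'.mp hz).2⟩
  have hfin : {z ∈ ball (0:ℂ) 1 | f z = w}.Finite := by
    rw [hFeq]; exact (R.roots.toFinset : Finset ℂ).finite_toSet
  refine ⟨hfin, ?_⟩
  have htf : hfin.toFinset = R.roots.toFinset := by
    ext z
    rw [Set.Finite.mem_toFinset, hFeq]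
    simp
  rw [htf]
  -- each zeroOrder equals the root multiplicity
  have hord : ∀ z₀ ∈ R.roots.toFinset,
      zeroOrder (fun x => f x - w) z₀ = rootMultiplicity z₀ R := by
    intro z₀ hz₀
    have hz₀r : z₀ ∈ R.roots := Multiset.mem_toFinset.mp hz₀
    have hz₀b : z₀ ∈ ball (0:ℂ) 1 := mem_ball01.mpr (hroots_ball z₀ hz₀r)
    set k := rootMultiplicity z₀ R with hk
    set Sv : ℂ[X] := R /ₘ (X - C z₀) ^ k with hSv
    have hfact : (X - C z₀) ^ k * Sv = R := R.pow_mul_divByMonic_rootMultiplicity_eq z₀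
    have hSne : Sv.eval z₀ ≠ 0 := eval_divByMonic_pow_rootMultiplicity_ne_zero z₀ hRne
    set g : ℂ → ℂ := fun z => Sv.eval z / Q.eval z with hg
    have hQan : ∀ z : ℂ, AnalyticAt ℂ (fun x => Q.eval x) z := fun z =>
      Q.differentiable.analyticAt z
    have hSan : ∀ z : ℂ, AnalyticAt ℂ (fun x => Sv.eval x) z := fun z =>
      Sv.differentiable.analyticAt z
    have hgan : AnalyticAt ℂ g z₀ := (hSan z₀).div (hQan z₀) (hQne z₀ (mem_ball01.mp hz₀b))
    have hg0 : g z₀ ≠ 0 := div_ne_zero hSne (hQne z₀ (mem_ball01.mp hz₀b))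
    have hevg : ∀ᶠ z in nhds z₀, (fun x => f x - w) z = (z - z₀) ^ k * g z := by
      filter_upwards [isOpen_ball.eventually_mem hz₀b] with z hzb
      have h1 : R.eval z = (z - z₀) ^ k * Sv.eval z := by
        conv_lhs => rw [← hfact]
        simp [eval_mul, eval_pow]
      show f z - w = (z - z₀) ^ k * g z
      rw [hfz' z hzb, h1, hg, mul_div_assoc]
    have hmem : k ∈ {n : ℕ | ∃ g : ℂ → ℂ, AnalyticAt ℂ g z₀ ∧ g z₀ ≠ 0 ∧
        ∀ᶠ z in nhds z₀, (fun x => f x - w) z = (z - z₀) ^ n * g z} :=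
      ⟨g, hgan, hg0, hevg⟩
    refine le_antisymm (Nat.sInf_le hmem) (le_csInf ⟨k, hmem⟩ ?_)
    rintro n ⟨g', hgan', hg0', hev'⟩
    by_contra hlt
    push_neg at hlt
    apply hg0'
    have heq : ∀ᶠ z in 𝓝[≠] z₀, g' z = (z - z₀) ^ (k - n) * g z := by
      filter_upwards [eventually_nhdsWithin_of_eventually_nhds (hev'.and hevg),
        eventually_mem_nhdsWithin] with z hz12 (hzne : z ∈ ({z₀}ᶜ : Set ℂ))
      obtain ⟨h1, h2⟩ := hz12
      have hznz : (z - z₀) ≠ 0 := sub_ne_zero.mpr hzne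
      have h3 : (z - z₀) ^ n * g' z = (z - z₀) ^ n * ((z - z₀) ^ (k - n) * g z) := by
        rw [← h1, h2, ← mul_assoc, ← pow_add]
        congr 2
        omega
      exact mul_left_cancel₀ (pow_ne_zero n hznz) h3
    have hg'cont : Tendsto g' (𝓝[≠] z₀) (𝓝 (g' z₀)) :=
      hgan'.continuousAt.continuousWithinAt.tendsto
    have hrhs : Tendsto (fun z => (z - z₀) ^ (k - n) * g z) (𝓝[≠] z₀) (𝓝 0) := by
      have hca : ContinuousAt (fun z => (z - z₀) ^ (k - n) * g z) z₀ :=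
        (ContinuousAt.pow (by fun_prop) _).mul hgan.continuousAt
      have hval : (z₀ - z₀) ^ (k - n) * g z₀ = 0 := by
        rw [sub_self, zero_pow (by omega), zero_mul]
      have := hca.tendsto.mono_left (nhdsWithin_le_nhds (s := ({z₀}ᶜ : Set ℂ)))
      rwa [hval] at this
    exact tendsto_nhds_unique_of_eventuallyEq hg'cont hrhs heq
  rw [Finset.sum_congr rfl hord]
  have hsum : ∑ z₀ ∈ R.roots.toFinset, rootMultiplicity z₀ R = R.roots.card := by
    rw [← Multiset.toFinset_sum_count_eq R.roots]
    exact Finset.sum_congr rfl fun z₀ _ => by rw [count_roots]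
  rw [hsum, ← hRdeg]
  exact (splits_iff_card_roots.mp (IsAlgClosed.splits R))
theorem stmt_16 (B : ℕ → ℂ → ℂ) (d : ℕ → ℕ)
    (hB : ∀ n, IsFiniteBlaschkeDeg (d n) (B n))
    (f : ℂ → ℂ) (hconv : TendstoUniformlyOn B f atTop (ball (0:ℂ) 1))
    (hnc : ¬ ∃ c : ℂ, ∀ z ∈ ball (0:ℂ) 1, f z = c)
    (N : ℕ) (hval : ∀ w ∈ ball (0:ℂ) 1, ∃ m ≤ N, HasValence f (ball (0:ℂ) 1) w m) :
    (∃ C : ℕ, ∀ᶠ n in atTop, d n ≤ C) ∧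
    ∃ (φ : ℕ → ℕ) (d₀ : ℕ), StrictMono φ ∧ (∀ n, d (φ n) = d₀) ∧
      ∀ w ∈ ball (0:ℂ) 1, HasValence f (ball (0:ℂ) 1) w d₀ := by
  have hev : ∀ᶠ n in atTop, d n ≤ N := deg_bound B d hB f hconv hnc N hval
  refine ⟨⟨N, hev⟩, ?_⟩
  obtain ⟨K, hK⟩ := eventually_atTop.mp hev
  classical
  have hinf : ∃ j ≤ N, {n : ℕ | K ≤ n ∧ d n = j}.Infinite := by
    by_contra h
    push_neg at h
    have hfin : {n : ℕ | K ≤ n}.Finite := by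
      have hsub : {n : ℕ | K ≤ n} ⊆
          ⋃ j ∈ Finset.range (N+1), {n : ℕ | K ≤ n ∧ d n = j} := by
        intro n hn
        simp only [Set.mem_iUnion, Finset.mem_range, Set.mem_setOf_eq]
        exact ⟨d n, by have := hK n hn; omega, hn, rfl⟩
      refine Set.Finite.subset ?_ hsub
      refine Set.Finite.biUnion (Finset.range (N+1)).finite_toSet fun j hj => ?_
      rw [Finset.mem_coe, Finset.mem_range] at hj
      exact h j (by omega)
    exact (Set.Ici_infinite K) hfin
  obtain ⟨d₀, hd₀N, hinfS⟩ := hinf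
  set ψ : ℕ → ℕ := Nat.nth (fun n => K ≤ n ∧ d n = d₀) with hψdef
  have hψmono : StrictMono ψ := Nat.nth_strictMono hinfS
  have hψmem : ∀ n, K ≤ ψ n ∧ d (ψ n) = d₀ := fun n => Nat.nth_mem_of_infinite hinfS n
  have hdψ : ∀ n, d (ψ n) = d₀ := fun n => (hψmem n).2
  choose lam a hlam hain hfor using fun n => hB (ψ n)
  set ζ : ℕ → Fin d₀ → ℂ := fun n i => a n (Fin.cast (hdψ n).symm i) with hζdef
  have hζ : ∀ n i, ζ n i ∈ ball (0:ℂ) 1 := fun n i => hain n _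
  have hreindex : ∀ (n : ℕ) (F : ℂ → ℂ → ℂ) (z : ℂ),
      ∏ i, F (a n i) z = ∏ i, F (ζ n i) z := by
    intro n F z
    exact Fintype.prod_equiv (finCongr (hdψ n)) _ _ fun i => by
      simp [hζdef, finCongr, Fin.cast]
  have hbd : ∀ n, ∀ z ∈ ball (0:ℂ) 1, ‖B (ψ n) z‖ ≤ ∏ i, ‖blaschkeFactor (ζ n i) z‖ := by
    intro n z hz
    rw [hfor n z hz, hreindex n (fun b z => blaschkeFactor b z) z, norm_mul, norm_prod,
      show ‖lam n‖ = 1 from hlam n, one_mul]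
  obtain ⟨σ, c, hσ, hcball, hlim, hfbd⟩ := key_extract B d hB f hconv d₀ ψ hψmono ζ hζ hbd
  -- extract a further subsequence along which the unimodular constants converge
  have hlammem : ∀ k, lam (σ k) ∈ closedBall (0:ℂ) 1 := fun k => by
    rw [Metric.mem_closedBall, dist_zero_right]
    exact le_of_eq (hlam (σ k))
  obtain ⟨lam₀, hlam₀S, τ, hτ, hlamlim⟩ :=
    (isCompact_closedBall (0:ℂ) 1).tendsto_subseq hlammem
  have hlam₀ : ‖lam₀‖ = 1 := by
    have h1 : Tendsto (fun k => ‖lam (σ (τ k))‖) atTop (𝓝 ‖lam₀‖) := hlamlim.norm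
    have h2 : Tendsto (fun k => ‖lam (σ (τ k))‖) atTop (𝓝 1) := by
      have : (fun k => ‖lam (σ (τ k))‖) = fun _ => (1:ℝ) := by
        funext k; exact hlam (σ (τ k))
      rw [this]; exact tendsto_const_nhds
    exact tendsto_nhds_unique h1 h2
  have hlimi : ∀ i, Tendsto (fun k => ζ (σ (τ k)) i) atTop (𝓝 (c i)) := fun i =>
    (tendsto_pi_nhds.mp (hlim.comp hτ.tendsto_atTop)) i
  have hflim : ∀ z ∈ ball (0:ℂ) 1, f z = lam₀ * ∏ i, blaschkeFactor (c i) z := by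
    intro z hz
    have hz' : ‖z‖ < 1 := mem_ball01.mp hz
    have hidx : StrictMono fun k => ψ (σ (τ k)) := hψmono.comp (hσ.comp hτ)
    have h1 : Tendsto (fun k => B (ψ (σ (τ k))) z) atTop (𝓝 (f z)) :=
      (hconv.tendsto_at hz).comp hidx.tendsto_atTop
    have h2 : Tendsto (fun k => B (ψ (σ (τ k))) z) atTop
        (𝓝 (lam₀ * ∏ i, blaschkeFactor (c i) z)) := by
      have heq : ∀ k, B (ψ (σ (τ k))) z =
          lam (σ (τ k)) * ∏ i, blaschkeFactor (ζ (σ (τ k)) i) z := by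
        intro k
        rw [hfor (σ (τ k)) z hz, hreindex (σ (τ k)) (fun b z => blaschkeFactor b z) z]
      simp only [heq]
      refine Tendsto.mul hlamlim ?_
      refine tendsto_finset_prod _ fun i _ => ?_
      exact ((bf_param_continuousAt hz' (mem_ball01.mp (hcball i)).le).tendsto).comp (hlimi i)
    exact tendsto_nhds_unique h1 h2
  refine ⟨fun k => ψ (σ (τ k)), d₀, hψmono.comp (hσ.comp hτ), fun k => hdψ _, fun w hw => ?_⟩
  exact valence_of_blaschke f lam₀ hlam₀ c (fun i => mem_ball01.mp (hcball i)) hflim w hw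
end

section
/- The function f(z) = 10⁻¹⁰ e^{10z} maps 𝔻 into 𝔻, has nonvanishing derivative, has bounded valence (at most 4 preimages for any point), but is not injective on 𝔻. -/
open Complex Metric MeasureTheory Set Filter

theorem stmt_17 (f : ℂ → ℂ)
    (hf : f = fun z => ((10:ℂ) ^ (10:ℕ))⁻¹ * Complex.exp (10 * z)) :
    Set.MapsTo f (ball (0:ℂ) 1) (ball (0:ℂ) 1) ∧
    (∀ z : ℂ, deriv f z ≠ 0) ∧
    (∀ w : ℂ, {z ∈ ball (0:ℂ) 1 | f z = w}.Finite ∧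
      {z ∈ ball (0:ℂ) 1 | f z = w}.ncard ≤ 4) ∧
    ¬ Set.InjOn f (ball (0:ℂ) 1) := by
  subst hf
  have hc : ((10:ℂ) ^ (10:ℕ))⁻¹ ≠ 0 := by norm_num
  refine ⟨?_, ?_, ?_, ?_⟩
  · -- MapsTo
    intro z hz
    rw [mem_ball_zero_iff] at hz ⊢
    have h1 : ‖((10:ℂ) ^ (10:ℕ))⁻¹ * Complex.exp (10 * z)‖
        = (10:ℝ)⁻¹ ^ (10:ℕ) * Real.exp (10 * z.re) := by
      rw [norm_mul, Complex.norm_exp]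
      simp [Complex.mul_re]
    rw [h1]
    have hre : z.re < 1 := lt_of_le_of_lt (le_trans (le_abs_self _) (Complex.abs_re_le_norm z)) hz
    have h2 : Real.exp (10 * z.re) < Real.exp 10 := by
      apply Real.exp_lt_exp.mpr; linarith
    have h3 : Real.exp 10 ≤ (2.7182818286 : ℝ) ^ (10:ℕ) := by
      have := Real.exp_one_lt_d9
      calc Real.exp 10 = (Real.exp 1) ^ (10:ℕ) := by
            rw [← Real.exp_nat_mul]; norm_num
        _ ≤ (2.7182818286 : ℝ) ^ (10:ℕ) :=
            pow_le_pow_left₀ (Real.exp_nonneg 1) this.le _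
    have h4 : (2.7182818286 : ℝ) ^ (10:ℕ) < 10 ^ (10:ℕ) := by norm_num
    have : (10:ℝ)⁻¹ ^ (10:ℕ) * Real.exp (10 * z.re) < (10:ℝ)⁻¹ ^ (10:ℕ) * 10 ^ (10:ℕ) := by
      apply mul_lt_mul_of_pos_left _ (by positivity)
      linarith
    calc (10:ℝ)⁻¹ ^ (10:ℕ) * Real.exp (10 * z.re)
        < (10:ℝ)⁻¹ ^ (10:ℕ) * 10 ^ (10:ℕ) := this
      _ = 1 := by norm_num
  · -- deriv ≠ 0
    intro z
    have hd : HasDerivAt (fun z => ((10:ℂ) ^ (10:ℕ))⁻¹ * Complex.exp (10 * z))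
        (((10:ℂ) ^ (10:ℕ))⁻¹ * (Complex.exp (10 * z) * 10)) z := by
      have h1 : HasDerivAt (fun z : ℂ => 10 * z) 10 z := by
        simpa using (hasDerivAt_id z).const_mul (10:ℂ)
      exact ((Complex.hasDerivAt_exp (10 * z)).comp z h1).const_mul _
    rw [hd.deriv]
    exact mul_ne_zero hc (mul_ne_zero (Complex.exp_ne_zero _) (by norm_num))
  · -- bounded valence
    intro w
    set S := {z ∈ ball (0:ℂ) 1 | (fun z => ((10:ℂ) ^ (10:ℕ))⁻¹ * Complex.exp (10 * z)) z = w} with hS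
    have key : ∀ z ∈ S, ∀ z' ∈ S, ∃ n : ℤ, z = z' + n * (↑Real.pi / 5) * Complex.I := by
      intro z hz z' hz'
      have he : Complex.exp (10 * z) = Complex.exp (10 * z') := by
        have h1 := hz.2; have h2 := hz'.2
        simp only at h1 h2
        have := h1.trans h2.symm
        exact mul_left_cancel₀ hc this
      rw [Complex.exp_eq_exp_iff_exists_int] at he
      obtain ⟨n, hn⟩ := he
      refine ⟨n, ?_⟩
      have h10 : (10:ℂ) ≠ 0 := by norm_num
      have : Real.pi * 2 = 2 * Real.pi := by ring
      linear_combination hn / 10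
    have him : ∀ z ∈ S, |z.im| < 1 := by
      intro z hz
      have := hz.1
      rw [mem_ball_zero_iff] at this
      exact lt_of_le_of_lt (Complex.abs_im_le_norm z) this
    have hpi : (3:ℝ) < Real.pi := Real.pi_gt_three
    have hfin : S.Finite := by
      rcases S.eq_empty_or_nonempty with h | ⟨z₀, hz₀⟩
      · simp [h]
      · apply Set.Finite.subset
          (Set.Finite.image (fun n : ℤ => z₀ + n * (↑Real.pi / 5) * Complex.I)
            (Set.finite_Icc (-4:ℤ) 4))
        intro z hz
        obtain ⟨n, hn⟩ := key z hz z₀ hz₀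
        refine ⟨n, ?_, hn.symm⟩
        have himz : z.im = z₀.im + n * (Real.pi / 5) := by
          rw [hn]; simp
        have h1 := him z hz
        have h2 := him z₀ hz₀
        have habs : |(n:ℝ)| * (Real.pi / 5) < 2 := by
          have h5 : |(n:ℝ) * (Real.pi / 5)| < 2 := by
            rw [abs_lt] at h1 h2 ⊢
            constructor <;> nlinarith [h1.1, h1.2, h2.1, h2.2]
          rw [abs_mul, abs_of_pos (show (0:ℝ) < Real.pi / 5 by positivity)] at h5
          exact h5
        rw [Set.mem_Icc]
        have habs4 : |(n:ℝ)| ≤ 4 := by nlinarith [abs_nonneg (n:ℝ)]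
        have : |n| ≤ 4 := by exact_mod_cast habs4
        exact abs_le.mp this
    refine ⟨hfin, ?_⟩
    rcases S.eq_empty_or_nonempty with h | hne
    · simp [h]
    · obtain ⟨m, hm, hmin⟩ := Set.exists_min_image S (fun z => z.im) hfin hne
      have hsub : S ⊆ (fun n : ℤ => m + n * (↑Real.pi / 5) * Complex.I) '' ({0,1,2,3} : Set ℤ) := by
        intro z hz
        obtain ⟨n, hn⟩ := key z hz m hm
        refine ⟨n, ?_, hn.symm⟩
        have himz : z.im = m.im + n * (Real.pi / 5) := by rw [hn]; simp
        have h1 := him z hz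
        have h2 := him m hm
        have hge : (0:ℝ) ≤ (n:ℝ) * (Real.pi / 5) := by
          have := hmin z hz; nlinarith
        have hn0 : (0:ℤ) ≤ n := by
          by_contra hcon
          push_neg at hcon
          have : (n:ℝ) < 0 := by exact_mod_cast hcon
          nlinarith
        have hlt : (n:ℝ) * (Real.pi / 5) < 2 := by
          rw [abs_lt] at h1 h2; nlinarith [h1.1, h1.2, h2.1, h2.2]
        have hn3 : n ≤ 3 := by
          by_contra hcon
          push_neg at hcon
          have : (4:ℝ) ≤ (n:ℝ) := by exact_mod_cast hcon
          nlinarith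
        simp only [Set.mem_insert_iff, Set.mem_singleton_iff]
        omega
      calc S.ncard ≤ ((fun n : ℤ => m + n * (↑Real.pi / 5) * Complex.I) '' ({0,1,2,3} : Set ℤ)).ncard :=
            Set.ncard_le_ncard hsub (Set.Finite.image _ (Set.toFinite _))
        _ ≤ ({0,1,2,3} : Set ℤ).ncard := Set.ncard_image_le (Set.toFinite _)
        _ ≤ 4 := by
            rw [show ({0,1,2,3} : Set ℤ) = ↑({0,1,2,3} : Finset ℤ) by simp,
              Set.ncard_coe_finset]
            decide
  · -- not injective
    intro h
    have hmem : ∀ t : ℝ, |t| < 1 → (t : ℂ) * Complex.I ∈ ball (0:ℂ) 1 := by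
      intro t ht
      rw [mem_ball_zero_iff]
      simpa using ht
    have hpi : Real.pi < 3.15 := by
      have := Real.pi_lt_d2; linarith
    have hpi0 : 0 < Real.pi := Real.pi_pos
    have h1 : ((Real.pi / 10 : ℝ) : ℂ) * Complex.I ∈ ball (0:ℂ) 1 := by
      apply hmem; rw [abs_of_pos (by positivity)]; linarith
    have h2 : ((-(Real.pi / 10) : ℝ) : ℂ) * Complex.I ∈ ball (0:ℂ) 1 := by
      apply hmem; rw [abs_neg, abs_of_pos (by positivity)]; linarith
    have hfeq : (fun z => ((10:ℂ) ^ (10:ℕ))⁻¹ * Complex.exp (10 * z))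
          (((Real.pi / 10 : ℝ) : ℂ) * Complex.I)
        = (fun z => ((10:ℂ) ^ (10:ℕ))⁻¹ * Complex.exp (10 * z))
          (((-(Real.pi / 10) : ℝ) : ℂ) * Complex.I) := by
      simp only
      congr 1
      have e1 : (10:ℂ) * (((Real.pi / 10 : ℝ) : ℂ) * Complex.I) = ↑Real.pi * Complex.I := by
        push_cast; ring
      have e2 : (10:ℂ) * (((-(Real.pi / 10) : ℝ) : ℂ) * Complex.I) = -(↑Real.pi * Complex.I) := by
        push_cast; ring
      rw [e1, e2, Complex.exp_pi_mul_I, Complex.exp_neg, Complex.exp_pi_mul_I]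
      norm_num
    have := h h1 h2 hfeq
    have : ((Real.pi / 10 : ℝ) : ℂ) = ((-(Real.pi / 10) : ℝ) : ℂ) :=
      mul_right_cancel₀ Complex.I_ne_zero this
    have : (Real.pi / 10 : ℝ) = -(Real.pi / 10) := by exact_mod_cast this
    linarith
end
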